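/- Define, for each integer n, the ℂ-linear operator D_n = z^{n+1}∂_q on ℂ[z, z^{−1}], i.e., D_n(z^k) = [k]·z^{n+k} for all k ∈ ℤ. Then for all integers m and n, the relation q^m·D_m∘D_n∘τ − q^n·D_n∘D_m∘τ = [n−m]·D_{m+n} holds as an identity of linear operators on ℂ[z, z^{−1}]. -/

import Mathlib

/-- The q-integer `[m] = (q^m - q^(-m))/(q - q⁻¹)`. -/
noncomputable def qInt (q : ℂ) (m : ℤ) : ℂ := (q ^ m - q ^ (-m)) / (q - q⁻¹)

/-- The operator `τ` on `ℂ[z,z⁻¹]`: `τ z^k = q^k·z^k`. -/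
noncomputable def tau (q : ℂ) : LaurentPolynomial ℂ →ₗ[ℂ] LaurentPolynomial ℂ :=
  (AddMonoidAlgebra.coeffLinearEquiv ℂ).symm.toLinearMap ∘ₗ
    ((Finsupp.lsum ℂ fun k => q ^ k • Finsupp.lsingle k : (ℤ →₀ ℂ) →ₗ[ℂ] (ℤ →₀ ℂ))) ∘ₗ
    (AddMonoidAlgebra.coeffLinearEquiv ℂ).toLinearMap

/-- The operator `D_n = z^{n+1}∂_q` on `ℂ[z,z⁻¹]`, i.e. the `ℂ`-linear map with
`D_n(z^k) = [k]·z^{n+k}` for all `k ∈ ℤ`. -/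
noncomputable def D (q : ℂ) (n : ℤ) : LaurentPolynomial ℂ →ₗ[ℂ] LaurentPolynomial ℂ :=
  (AddMonoidAlgebra.coeffLinearEquiv ℂ).symm.toLinearMap ∘ₗ
    ((Finsupp.lsum ℂ fun k => qInt q k • Finsupp.lsingle (n + k) : (ℤ →₀ ℂ) →ₗ[ℂ] (ℤ →₀ ℂ))) ∘ₗ
    (AddMonoidAlgebra.coeffLinearEquiv ℂ).toLinearMap

theorem smul_lsingle_apply (x : ℂ) (a : ℤ) (c : ℂ) :
    (x • Finsupp.lsingle a : ℂ →ₗ[ℂ] (ℤ →₀ ℂ)) c = Finsupp.single a (x * c) := by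
  erw [LinearMap.smul_apply, Finsupp.lsingle_apply, Finsupp.smul_single, smul_eq_mul]

theorem smul_single_laurent (x : ℂ) (a : ℤ) (c : ℂ) :
    x • (AddMonoidAlgebra.single a c : LaurentPolynomial ℂ) = AddMonoidAlgebra.single a (x * c) := by
  rw [AddMonoidAlgebra.smul_single, smul_eq_mul]

theorem D_single (q : ℂ) (n k : ℤ) (c : ℂ) :
    D q n (AddMonoidAlgebra.single k c) = AddMonoidAlgebra.single (n + k) (qInt q k * c) := by
  simp only [D, LinearMap.comp_apply, LinearEquiv.coe_coe,
    AddMonoidAlgebra.coeffLinearEquiv_apply, AddMonoidAlgebra.coeff_single, Finsupp.lsum_single,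
    smul_lsingle_apply, AddMonoidAlgebra.coeffLinearEquiv_symm_apply, AddMonoidAlgebra.ofCoeff_single]

theorem tau_single (q : ℂ) (k : ℤ) (c : ℂ) :
    tau q (AddMonoidAlgebra.single k c) = AddMonoidAlgebra.single k (q ^ k * c) := by
  simp only [tau, LinearMap.comp_apply, LinearEquiv.coe_coe,
    AddMonoidAlgebra.coeffLinearEquiv_apply, AddMonoidAlgebra.coeff_single, Finsupp.lsum_single,
    smul_lsingle_apply, AddMonoidAlgebra.coeffLinearEquiv_symm_apply, AddMonoidAlgebra.ofCoeff_single]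

theorem D_bracket_aux (q : ℂ) (hq : q ≠ 0) (m n k : ℤ) :
    q ^ m * (qInt q (n + k) * (qInt q k * q ^ k))
      - q ^ n * (qInt q (m + k) * (qInt q k * q ^ k))
      = qInt q (n - m) * qInt q k := by
  have h1 : ∀ a b : ℤ, q ^ (a + b) = q ^ a * q ^ b := fun a b => zpow_add₀ hq a b
  have h2 : ∀ a b : ℤ, q ^ (a - b) = q ^ a * (q ^ b)⁻¹ := fun a b => by
    rw [zpow_sub₀ hq, div_eq_mul_inv]
  have hm : q ^ m ≠ 0 := zpow_ne_zero _ hq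
  have hn : q ^ n ≠ 0 := zpow_ne_zero _ hq
  have hk : q ^ k ≠ 0 := zpow_ne_zero _ hq
  have key : q ^ m * ((q ^ (n+k) - q ^ (-(n+k))) * ((q ^ k - q ^ (-k)) * q ^ k))
      - q ^ n * ((q ^ (m+k) - q ^ (-(m+k))) * ((q ^ k - q ^ (-k)) * q ^ k))
      = (q ^ (n-m) - q ^ (-(n-m))) * (q ^ k - q ^ (-k)) := by
    simp only [neg_add, neg_sub, h1, h2, zpow_neg, mul_inv]
    field_simp
    ring
  simp only [qInt, div_eq_mul_inv]
  linear_combination key * ((q - q⁻¹)⁻¹ * (q - q⁻¹)⁻¹)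

/-- `q^m·D_m∘D_n∘τ − q^n·D_n∘D_m∘τ = [n−m]·D_{m+n}` as an identity of linear
operators on `ℂ[z,z⁻¹]`. -/
theorem D_bracket (q : ℂ) (hq : q ≠ 0) (hq2 : q ^ 2 ≠ 1) (m n : ℤ) :
    q ^ m • (D q m ∘ₗ D q n ∘ₗ tau q) - q ^ n • (D q n ∘ₗ D q m ∘ₗ tau q)
      = qInt q (n - m) • D q (m + n) := by
  apply AddMonoidAlgebra.lhom_ext'
  intro k
  apply LinearMap.ext
  intro c
  simp only [LinearMap.comp_apply, AddMonoidAlgebra.lsingle_apply]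
  simp only [LinearMap.sub_apply, LinearMap.smul_apply, LinearMap.comp_apply,
    tau_single, smul_single_laurent]
  simp only [D_single, smul_single_laurent]
  rw [show m + (n + k) = m + n + k from by ring, show n + (m + k) = m + n + k from by ring]
  rw [← AddMonoidAlgebra.single_sub]
  have hv : q ^ m * (qInt q (n + k) * (qInt q k * (q ^ k * c)))
        - q ^ n * (qInt q (m + k) * (qInt q k * (q ^ k * c)))
      = qInt q (n - m) * (qInt q k * c) := by
    linear_combination c * D_bracket_aux q hq m n k
  rw [hv]
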